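/- arXiv:2107.04310 — 3 statements merged into one kernel-verified Lean document; each statement's English description precedes it below -/
import Mathlib

section
/- Fix N ≥ 2. Let E₀ > 0 and let τ₁₁,…,τ_{NN} be positive reals with τ_{ii} ≤ E₀/N for each i. Set E₁ = τ₁₁+…+τ_{NN}, R = 1 − E₁/E₀, and assume R < 1/N. Let ε₀ satisfy (1+ε₀)^{2N/(N−1)} = (τ₂₂+…+τ_{NN})/((N−1)τ₁₁) with 1+ε₀ > 0. Then (1 − (N/(N−1))R)^{(N−1)/(2N)} − 1 ≤ ε₀ ≤ (1−NR)^{−(N−1)/(2N)} − 1. -/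
theorem stmt_8 (n : ℕ) (E₀ : ℝ) (hE₀ : 0 < E₀) (τ : Fin (n + 2) → ℝ)
    (hτpos : ∀ i, 0 < τ i) (hτle : ∀ i, τ i ≤ E₀ / ((n : ℝ) + 2))
    (E₁ R ε₀ : ℝ)
    (hE₁ : E₁ = ∑ i, τ i)
    (hR : R = 1 - E₁ / E₀)
    (hRlt : R < 1 / ((n : ℝ) + 2))
    (hε : 0 < 1 + ε₀)
    (hεeq : (1 + ε₀) ^ ((2 * ((n : ℝ) + 2)) / ((n : ℝ) + 1)) =
        (∑ i ∈ Finset.univ.erase 0, τ i) / (((n : ℝ) + 1) * τ 0)) :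
    (1 - (((n : ℝ) + 2) / ((n : ℝ) + 1)) * R) ^ (((n : ℝ) + 1) / (2 * ((n : ℝ) + 2))) - 1
      ≤ ε₀ ∧
    ε₀ ≤ (1 - ((n : ℝ) + 2) * R) ^ (-(((n : ℝ) + 1) / (2 * ((n : ℝ) + 2)))) - 1 := by
  have hn1 : (0:ℝ) < (n:ℝ) + 1 := by positivity
  have hn2 : (0:ℝ) < (n:ℝ) + 2 := by positivity
  have hτ0 : 0 < τ 0 := hτpos 0
  have hτ0le : ((n:ℝ) + 2) * τ 0 ≤ E₀ := by
    have := hτle 0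
    rw [le_div_iff₀ hn2] at this
    linarith
  -- sum over erase
  have hS' : ∑ i ∈ Finset.univ.erase 0, τ i = E₁ - τ 0 := by
    rw [hE₁, Finset.sum_erase_eq_sub (Finset.mem_univ 0)]
  -- E₁ - τ 0 > 0
  have hcard : (Finset.univ.erase (0 : Fin (n+2))).card = n + 1 := by
    rw [Finset.card_erase_of_mem (Finset.mem_univ 0), Finset.card_univ, Fintype.card_fin]
    omega
  have hS'pos : 0 < E₁ - τ 0 := by
    rw [← hS']
    apply Finset.sum_pos (fun i _ => hτpos i)
    rw [← Finset.card_pos, hcard]; omega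
  have hS'le : ((n:ℝ) + 2) * (E₁ - τ 0) ≤ ((n:ℝ) + 1) * E₀ := by
    have h1 : ∑ i ∈ Finset.univ.erase 0, τ i ≤ ((n:ℝ)+1) * (E₀ / ((n:ℝ)+2)) := by
      calc ∑ i ∈ Finset.univ.erase 0, τ i
          ≤ (Finset.univ.erase (0 : Fin (n+2))).card • (E₀ / ((n:ℝ)+2)) :=
            Finset.sum_le_card_nsmul _ _ _ (fun i _ => hτle i)
        _ = ((n:ℝ)+1) * (E₀ / ((n:ℝ)+2)) := by
            rw [hcard]; push_cast [nsmul_eq_mul]; ring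
    rw [hS'] at h1
    have h2 : ((n:ℝ)+1) * (E₀ / ((n:ℝ)+2)) = ((n:ℝ)+1) * E₀ / ((n:ℝ)+2) := by ring
    rw [h2, le_div_iff₀ hn2] at h1
    linarith
  have hE₁pos : 0 < E₁ := by linarith
  set A : ℝ := (E₁ - τ 0) / (((n:ℝ) + 1) * τ 0) with hA
  have hApos : 0 < A := div_pos hS'pos (by positivity)
  set L : ℝ := 1 - (((n:ℝ) + 2) / ((n:ℝ) + 1)) * R with hLdef
  set U : ℝ := 1 - ((n:ℝ) + 2) * R with hUdef
  have hUpos : 0 < U := by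
    rw [hUdef]
    have : ((n:ℝ)+2) * R < ((n:ℝ)+2) * (1 / ((n:ℝ)+2)) := by
      exact mul_lt_mul_of_pos_left hRlt hn2
    rw [mul_one_div, div_self hn2.ne'] at this
    linarith
  have hLpos : 0 < L := by
    rw [hLdef]
    rcases le_or_gt R 0 with h | h
    · have : (((n:ℝ)+2)/((n:ℝ)+1)) * R ≤ 0 := mul_nonpos_of_nonneg_of_nonpos (by positivity) h
      linarith
    · have h2 : (((n:ℝ)+2)/((n:ℝ)+1)) * R < (((n:ℝ)+2)/((n:ℝ)+1)) * (1/((n:ℝ)+2)) :=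
        mul_lt_mul_of_pos_left hRlt (by positivity)
      have h3 : (((n:ℝ)+2)/((n:ℝ)+1)) * (1/((n:ℝ)+2)) = 1/((n:ℝ)+1) := by
        field_simp
      have h4 : 1/((n:ℝ)+1) ≤ 1 := by
        rw [div_le_one hn1]; linarith
      linarith
  -- key inequalities  L ≤ A and A ≤ U⁻¹
  have hEdiv : E₁ / E₀ * E₀ = E₁ := div_mul_cancel₀ _ hE₀.ne'
  have hLA : L ≤ A := by
    rw [hA, hLdef, le_div_iff₀ (by positivity), hR]
    have key : 0 ≤ E₁ * (E₀ - ((n:ℝ)+2) * τ 0) :=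
      mul_nonneg hE₁pos.le (by linarith)
    have expand : (E₁ - τ 0) - (1 - (((n:ℝ)+2)/((n:ℝ)+1)) * (1 - E₁/E₀)) * (((n:ℝ)+1) * τ 0)
        = (E₁ * (E₀ - ((n:ℝ)+2) * τ 0)) / E₀ := by
      field_simp
      ring
    linarith [div_nonneg key hE₀.le, expand]
  have hAU : A ≤ U⁻¹ := by
    rw [hA, hUdef, hR, div_le_iff₀ (by positivity : (0:ℝ) < ((n:ℝ)+1) * τ 0)]
    rw [inv_mul_eq_div, le_div_iff₀ (by rw [hUdef, hR] at hUpos; exact hUpos)]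
    have key : 0 ≤ (E₁/E₀) * (((n:ℝ)+1) * E₀ - ((n:ℝ)+2) * (E₁ - τ 0)) :=
      mul_nonneg (by positivity) (by linarith)
    have expand : ((n:ℝ)+1) * τ 0 - (E₁ - τ 0) * (1 - ((n:ℝ)+2) * (1 - E₁/E₀))
        = (E₁/E₀) * (((n:ℝ)+1) * E₀ - ((n:ℝ)+2) * (E₁ - τ 0)) := by
      field_simp
      ring
    linarith [key, expand]
  -- exponents
  set p : ℝ := (2 * ((n : ℝ) + 2)) / ((n : ℝ) + 1) with hp
  set q : ℝ := ((n : ℝ) + 1) / (2 * ((n : ℝ) + 2)) with hq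
  have hppos : 0 < p := by positivity
  have hqpos : 0 < q := by positivity
  have hpq : p * q = 1 := by
    rw [hp, hq]; field_simp
  have h1ε : 1 + ε₀ = A ^ q := by
    have h := congrArg (fun x : ℝ => x ^ q) hεeq
    rw [← Real.rpow_mul hε.le, hpq, Real.rpow_one, hS', ← hA] at h
    exact h
  constructor
  · have : L ^ q ≤ A ^ q := Real.rpow_le_rpow hLpos.le hLA hqpos.le
    rw [← h1ε] at this
    rw [hLdef] at this
    linarith
  · have h2 : A ^ q ≤ (U⁻¹) ^ q := Real.rpow_le_rpow hApos.le hAU hqpos.le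
    have h3 : (U⁻¹) ^ q = U ^ (-q) := by
      rw [Real.inv_rpow hUpos.le, ← Real.rpow_neg hUpos.le]
    rw [← h1ε, h3] at h2
    rw [hUdef] at h2
    linarith
end

section
/- Let W₀, W₁, E₀, E₁ > 0, let z₀, z₁ ∈ ℝᴺ with ‖z₀‖² = W₀E₀R₀ and ‖z₁‖² = W₁E₁R₀ for some R₀ > 0. For s ∈ [0,1] define W_s = (1−s)W₀+sW₁, E_s = (1−s)E₀+sE₁, z_s = (1−s)z₀+sz₁, and R_s = ‖z_s‖²/(W_s E_s). Then R_s ≤ R₀ for all s ∈ [0,1]. -/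
theorem stmt_9 (N : ℕ) (W₀ W₁ E₀ E₁ R₀ : ℝ)
    (hW₀ : 0 < W₀) (hW₁ : 0 < W₁) (hE₀ : 0 < E₀) (hE₁ : 0 < E₁) (hR₀ : 0 < R₀)
    (z₀ z₁ : EuclideanSpace ℝ (Fin N))
    (hz₀ : ‖z₀‖ ^ 2 = W₀ * E₀ * R₀) (hz₁ : ‖z₁‖ ^ 2 = W₁ * E₁ * R₀) :
    ∀ s ∈ Set.Icc (0 : ℝ) 1,
      ‖(1 - s) • z₀ + s • z₁‖ ^ 2 / (((1 - s) * W₀ + s * W₁) * ((1 - s) * E₀ + s * E₁))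
        ≤ R₀ := by
  rintro s ⟨hs0, hs1⟩
  set a := ‖z₀‖ with ha
  set b := ‖z₁‖ with hb
  have ha0 : 0 ≤ a := norm_nonneg _
  have hb0 : 0 ≤ b := norm_nonneg _
  have hWs : 0 < (1 - s) * W₀ + s * W₁ := by
    rcases eq_or_lt_of_le hs0 with h | h
    · simp [← h]; linarith
    · nlinarith [mul_pos h hW₁, mul_nonneg (by linarith : (0:ℝ) ≤ 1 - s) hW₀.le]
  have hEs : 0 < (1 - s) * E₀ + s * E₁ := by
    rcases eq_or_lt_of_le hs0 with h | h
    · simp [← h]; linarith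
    · nlinarith [mul_pos h hE₁, mul_nonneg (by linarith : (0:ℝ) ≤ 1 - s) hE₀.le]
  have hden : 0 < ((1 - s) * W₀ + s * W₁) * ((1 - s) * E₀ + s * E₁) := mul_pos hWs hEs
  rw [div_le_iff₀ hden]
  have hnorm : ‖(1 - s) • z₀ + s • z₁‖ ≤ (1 - s) * a + s * b := by
    calc ‖(1 - s) • z₀ + s • z₁‖ ≤ ‖(1 - s) • z₀‖ + ‖s • z₁‖ := norm_add_le _ _
    _ = (1 - s) * a + s * b := by
        rw [norm_smul, norm_smul, Real.norm_eq_abs, Real.norm_eq_abs,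
          abs_of_nonneg (by linarith), abs_of_nonneg hs0]
  have hrhs0 : 0 ≤ (1 - s) * a + s * b := by nlinarith
  have hsq : ‖(1 - s) • z₀ + s • z₁‖ ^ 2 ≤ ((1 - s) * a + s * b) ^ 2 := by
    nlinarith [norm_nonneg ((1 - s) • z₀ + s • z₁)]
  refine hsq.trans ?_
  have hab : (a * b) ^ 2 = (W₀ * E₀ * R₀) * (W₁ * E₁ * R₀) := by
    rw [mul_pow, hz₀, hz₁]
  have hrhspos : 0 < R₀ * (W₀ * E₁ + W₁ * E₀) / 2 := by positivity
  have h2 : (a * b) ^ 2 ≤ (R₀ * (W₀ * E₁ + W₁ * E₀) / 2) ^ 2 := by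
    nlinarith [mul_nonneg (sq_nonneg R₀) (sq_nonneg (W₀ * E₁ - W₁ * E₀))]
  have key : a * b ≤ R₀ * (W₀ * E₁ + W₁ * E₀) / 2 := by
    nlinarith [mul_nonneg ha0 hb0]
  have hss : 0 ≤ (1 - s) * s := mul_nonneg (by linarith) hs0
  have hcross : 2 * ((1 - s) * s) * (a * b) ≤ (1 - s) * s * (R₀ * (W₀ * E₁ + W₁ * E₀)) := by
    have := mul_le_mul_of_nonneg_left key hss
    linarith
  have e0 : (1 - s) ^ 2 * a ^ 2 = (1 - s) ^ 2 * (W₀ * E₀ * R₀) := by rw [hz₀]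
  have e1 : s ^ 2 * b ^ 2 = s ^ 2 * (W₁ * E₁ * R₀) := by rw [hz₁]
  have expand : ((1 - s) * a + s * b) ^ 2
      = (1 - s) ^ 2 * a ^ 2 + 2 * ((1 - s) * s) * (a * b) + s ^ 2 * b ^ 2 := by ring
  have expand2 : R₀ * (((1 - s) * W₀ + s * W₁) * ((1 - s) * E₀ + s * E₁))
      = (1 - s) ^ 2 * (W₀ * E₀ * R₀) + (1 - s) * s * (R₀ * (W₀ * E₁ + W₁ * E₀))
        + s ^ 2 * (W₁ * E₁ * R₀) := by ring
  rw [expand, expand2]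
  linarith [hcross, e0, e1]
end

section
/- Let W₀, W₁, E₀, E₁ > 0. The function f(s) = (1−s)s / (((1−s)W₀+sW₁)((1−s)E₀+sE₁)) on (0,1) attains its maximum at ŝ = √(W₀E₀)/(√(W₀E₀)+√(W₁E₁)); it is increasing on (0, ŝ) and decreasing on (ŝ, 1). -/
theorem stmt_12 (W₀ W₁ E₀ E₁ : ℝ)
    (hW₀ : 0 < W₀) (hW₁ : 0 < W₁) (hE₀ : 0 < E₀) (hE₁ : 0 < E₁) :
    let f : ℝ → ℝ := fun s =>
      (1 - s) * s / (((1 - s) * W₀ + s * W₁) * ((1 - s) * E₀ + s * E₁))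
    let sh : ℝ := Real.sqrt (W₀ * E₀) / (Real.sqrt (W₀ * E₀) + Real.sqrt (W₁ * E₁))
    (∀ s ∈ Set.Ioo (0 : ℝ) 1, f s ≤ f sh) ∧
    StrictMonoOn f (Set.Ioc 0 sh) ∧ StrictAntiOn f (Set.Ico sh 1) := by
  intro f sh
  have ha : 0 < W₀ * E₀ := mul_pos hW₀ hE₀
  have hb : 0 < W₁ * E₁ := mul_pos hW₁ hE₁
  have hsa : 0 < Real.sqrt (W₀ * E₀) := Real.sqrt_pos.mpr ha
  have hsb : 0 < Real.sqrt (W₁ * E₁) := Real.sqrt_pos.mpr hb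
  have hsum : 0 < Real.sqrt (W₀ * E₀) + Real.sqrt (W₁ * E₁) := by linarith
  have hsqa : Real.sqrt (W₀ * E₀) ^ 2 = W₀ * E₀ := Real.sq_sqrt ha.le
  have hsqb : Real.sqrt (W₁ * E₁) ^ 2 = W₁ * E₁ := Real.sq_sqrt hb.le
  have hsh0 : 0 < sh := div_pos hsa hsum
  have hsh1 : sh < 1 := by
    show Real.sqrt (W₀ * E₀) / (Real.sqrt (W₀ * E₀) + Real.sqrt (W₁ * E₁)) < 1
    rw [div_lt_one hsum]; linarith
  have hle : ∀ s : ℝ, 0 ≤ s → s ≤ sh →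
      (W₁ * E₁) * s ^ 2 ≤ (W₀ * E₀) * (1 - s) ^ 2 := by
    intro s hs0 hs
    have h1 : s * Real.sqrt (W₁ * E₁) ≤ (1 - s) * Real.sqrt (W₀ * E₀) := by
      have := (le_div_iff₀ hsum).mp hs
      nlinarith
    have h0 : 0 ≤ s * Real.sqrt (W₁ * E₁) := by positivity
    nlinarith [mul_self_le_mul_self h0 h1]
  have hge : ∀ s : ℝ, s < 1 → sh ≤ s →
      (W₀ * E₀) * (1 - s) ^ 2 ≤ (W₁ * E₁) * s ^ 2 := by
    intro s hs1 hs
    have h1 : (1 - s) * Real.sqrt (W₀ * E₀) ≤ s * Real.sqrt (W₁ * E₁) := by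
      have := (div_le_iff₀ hsum).mp hs
      nlinarith
    have h0 : 0 ≤ (1 - s) * Real.sqrt (W₀ * E₀) := by
      have : 0 ≤ (1 - s) := by linarith
      positivity
    nlinarith [mul_self_le_mul_self h0 h1]
  have hcomp : ∀ s₁ s₂ : ℝ, 0 < s₁ → s₁ < s₂ → s₂ < 1 →
      (W₁ * E₁) * s₁ * s₂ < (W₀ * E₀) * (1 - s₁) * (1 - s₂) → f s₁ < f s₂ := by
    intro s₁ s₂ h0 h12 h1 hcond
    have hd₁ : 0 < ((1 - s₁) * W₀ + s₁ * W₁) * ((1 - s₁) * E₀ + s₁ * E₁) := by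
      have hs1 : 0 < 1 - s₁ := by linarith
      have := mul_pos (add_pos (mul_pos hs1 hW₀) (mul_pos h0 hW₁))
        (add_pos (mul_pos hs1 hE₀) (mul_pos h0 hE₁))
      exact this
    have hd₂ : 0 < ((1 - s₂) * W₀ + s₂ * W₁) * ((1 - s₂) * E₀ + s₂ * E₁) := by
      have hs2 : 0 < 1 - s₂ := by linarith
      have h02 : 0 < s₂ := by linarith
      exact mul_pos (add_pos (mul_pos hs2 hW₀) (mul_pos h02 hW₁))
        (add_pos (mul_pos hs2 hE₀) (mul_pos h02 hE₁))
    show (1 - s₁) * s₁ / _ < (1 - s₂) * s₂ / _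
    rw [div_lt_div_iff₀ hd₁ hd₂]
    nlinarith [mul_pos (sub_pos.mpr h12) (sub_pos.mpr hcond)]
  have hcomp' : ∀ s₁ s₂ : ℝ, 0 < s₁ → s₁ < s₂ → s₂ < 1 →
      (W₀ * E₀) * (1 - s₁) * (1 - s₂) < (W₁ * E₁) * s₁ * s₂ → f s₂ < f s₁ := by
    intro s₁ s₂ h0 h12 h1 hcond
    have hd₁ : 0 < ((1 - s₁) * W₀ + s₁ * W₁) * ((1 - s₁) * E₀ + s₁ * E₁) := by
      have hs1 : 0 < 1 - s₁ := by linarith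
      exact mul_pos (add_pos (mul_pos hs1 hW₀) (mul_pos h0 hW₁))
        (add_pos (mul_pos hs1 hE₀) (mul_pos h0 hE₁))
    have hd₂ : 0 < ((1 - s₂) * W₀ + s₂ * W₁) * ((1 - s₂) * E₀ + s₂ * E₁) := by
      have hs2 : 0 < 1 - s₂ := by linarith
      have h02 : 0 < s₂ := by linarith
      exact mul_pos (add_pos (mul_pos hs2 hW₀) (mul_pos h02 hW₁))
        (add_pos (mul_pos hs2 hE₀) (mul_pos h02 hE₁))
    show (1 - s₂) * s₂ / _ < (1 - s₁) * s₁ / _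
    rw [div_lt_div_iff₀ hd₂ hd₁]
    nlinarith [mul_pos (sub_pos.mpr h12) (sub_pos.mpr hcond)]
  refine ⟨?_, ?_, ?_⟩
  · intro s hs
    rcases lt_trichotomy s sh with h | h | h
    · have hcond : (W₁ * E₁) * s * sh < (W₀ * E₀) * (1 - s) * (1 - sh) := by
        have h2 := hle sh hsh0.le le_rfl
        nlinarith [mul_pos hb (mul_pos hsh0 (sub_pos.mpr h)),
          mul_nonneg (mul_nonneg ha.le (by linarith : (0:ℝ) ≤ 1 - sh))
            (sub_nonneg.mpr h.le)]
      exact (hcomp s sh hs.1 h hsh1 hcond).le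
    · rw [h]
    · have hcond : (W₀ * E₀) * (1 - sh) * (1 - s) < (W₁ * E₁) * sh * s := by
        have h2 := hge sh hsh1 le_rfl
        nlinarith [mul_pos (mul_pos ha (by linarith : (0:ℝ) < 1 - sh)) (sub_pos.mpr h),
          mul_nonneg (mul_nonneg hb.le hsh0.le) (sub_nonneg.mpr h.le)]
      exact (hcomp' sh s hsh0 h hs.2 hcond).le
  · intro s₁ hs₁ s₂ hs₂ h12
    have hs₂1 : s₂ < 1 := lt_of_le_of_lt hs₂.2 hsh1
    apply hcomp s₁ s₂ hs₁.1 h12 hs₂1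
    have h2 := hle s₂ (le_of_lt (lt_trans hs₁.1 h12)) hs₂.2
    nlinarith [mul_pos hb (mul_pos (lt_trans hs₁.1 h12) (sub_pos.mpr h12)),
      mul_nonneg (mul_nonneg ha.le (by linarith : (0:ℝ) ≤ 1 - s₂))
        (sub_nonneg.mpr h12.le)]
  · intro s₁ hs₁ s₂ hs₂ h12
    have hs₁0 : 0 < s₁ := lt_of_lt_of_le hsh0 hs₁.1
    apply hcomp' s₁ s₂ hs₁0 h12 hs₂.2
    have h2 := hge s₁ (lt_trans h12 hs₂.2) hs₁.1
    nlinarith [mul_pos (mul_pos ha (by linarith [hs₁.2] : (0:ℝ) < 1 - s₁)) (sub_pos.mpr h12),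
      mul_nonneg (mul_nonneg hb.le hs₁0.le) (sub_nonneg.mpr h12.le)]
end
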